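/- Let S ⊆ [0, ∞), and let a₁₁, a₂₂, a₁₂ : S → ℝ be continuous real-valued functions such that for every z ∈ S the symmetric 2×2 matrix [[a₁₁(z), a₁₂(z)],[a₁₂(z), a₂₂(z)]] is positive semidefinite. Then for every positive bounded operator P on a complex Hilbert space H whose spectrum is contained in S, the block operator [[a₁₁(P), a₁₂(P)],[a₁₂(P), a₂₂(P)]] on H ⊕ H (where a_{ij}(P) is defined by the continuous functional calculus) is a positive operator. -/

import Mathlib

open scoped InnerProductSpace

set_option maxHeartbeats 1600000 in
/-- If `a₁₁, a₂₂, a₁₂` are continuous real functions on `S ⊆ [0,∞)` such that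
`[[a₁₁(z), a₁₂(z)],[a₁₂(z), a₂₂(z)]]` is positive semidefinite for all `z ∈ S`, then for every
positive operator `P` with spectrum in `S`, the block operator
`[[a₁₁(P), a₁₂(P)],[a₁₂(P), a₂₂(P)]]` on `H ⊕ H` is positive. -/
theorem block_operator_positive_of_entrywise_psd
    {H : Type*} [NormedAddCommGroup H] [InnerProductSpace ℂ H] [CompleteSpace H]
    (S : Set ℝ) (hS : S ⊆ Set.Ici (0 : ℝ))
    (a₁₁ a₂₂ a₁₂ : ℝ → ℝ)
    (h₁₁ : ContinuousOn a₁₁ S) (h₂₂ : ContinuousOn a₂₂ S) (h₁₂ : ContinuousOn a₁₂ S)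
    (hpsd : ∀ z ∈ S, (!![a₁₁ z, a₁₂ z; a₁₂ z, a₂₂ z] : Matrix (Fin 2) (Fin 2) ℝ).PosSemidef)
    (P : H →L[ℂ] H) (hP : P.IsPositive) (hspec : spectrum ℝ P ⊆ S)
    (T : WithLp 2 (H × H) →L[ℂ] WithLp 2 (H × H))
    (hT : ∀ u v : H, T ((WithLp.equiv 2 (H × H)).symm (u, v)) =
        (WithLp.equiv 2 (H × H)).symm
          (cfc a₁₁ P u + cfc a₁₂ P v, cfc a₁₂ P u + cfc a₂₂ P v)) :
    T.IsPositive := by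
  classical
  have hPsa : IsSelfAdjoint P := hP.isSelfAdjoint
  -- scalar consequences of positive semidefiniteness
  have hfacts : ∀ z ∈ spectrum ℝ P,
      0 ≤ a₁₁ z ∧ 0 ≤ a₂₂ z ∧ a₁₂ z ^ 2 ≤ a₁₁ z * a₂₂ z := by
    intro z hz
    have hzS := hspec hz
    have key : ∀ t s : ℝ,
        0 ≤ a₁₁ z * (t * t) + 2 * a₁₂ z * (t * s) + a₂₂ z * (s * s) := by
      intro t s
      have h2 := (hpsd z hzS).dotProduct_mulVec_nonneg ![t, s]
      simp [dotProduct, Matrix.mulVec, Fin.sum_univ_two] at h2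
      nlinarith [h2]
    have h1 : 0 ≤ a₁₁ z := by nlinarith [key 1 0]
    have h2 : 0 ≤ a₂₂ z := by nlinarith [key 0 1]
    have h3 : discrim (a₁₁ z) (2 * a₁₂ z) (a₂₂ z) ≤ 0 := by
      apply discrim_le_zero
      intro t
      nlinarith [key t 1]
    rw [discrim] at h3
    exact ⟨h1, h2, by nlinarith⟩
  set A := cfc a₁₁ P with hAdef
  set B := cfc a₂₂ P with hBdef
  set C := cfc a₁₂ P with hCdef
  have hA : IsSelfAdjoint A := cfc_predicate a₁₁ P
  have hB : IsSelfAdjoint B := cfc_predicate a₂₂ P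
  have hC : IsSelfAdjoint C := cfc_predicate a₁₂ P
  have hAs : ∀ p q : H, ⟪A p, q⟫_ℂ = ⟪p, A q⟫_ℂ := fun p q =>
    (ContinuousLinearMap.isSelfAdjoint_iff_isSymmetric.mp hA) p q
  have hBs : ∀ p q : H, ⟪B p, q⟫_ℂ = ⟪p, B q⟫_ℂ := fun p q =>
    (ContinuousLinearMap.isSelfAdjoint_iff_isSymmetric.mp hB) p q
  have hCs : ∀ p q : H, ⟪C p, q⟫_ℂ = ⟪p, C q⟫_ℂ := fun p q =>
    (ContinuousLinearMap.isSelfAdjoint_iff_isSymmetric.mp hC) p q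
  have hTx : ∀ x : WithLp 2 (H × H), T x = (WithLp.equiv 2 (H × H)).symm
      (A x.fst + C x.snd, C x.fst + B x.snd) := fun x => hT x.fst x.snd
  have hTsa : IsSelfAdjoint T := by
    rw [ContinuousLinearMap.isSelfAdjoint_iff_isSymmetric]
    intro x y
    simp only [LinearMap.coe_coe, ContinuousLinearMap.coe_coe, hTx x, hTx y,
      WithLp.prod_inner_apply, WithLp.equiv_symm_apply, WithLp.ofLp_toLp, WithLp.ofLp_fst,
      WithLp.ofLp_snd, inner_add_left, inner_add_right]
    rw [hAs, hBs, hCs x.fst y.snd, hCs x.snd y.fst]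
    ring
  refine ⟨ContinuousLinearMap.isSelfAdjoint_iff_isSymmetric.mp hTsa, fun x => ?_⟩
  rw [ContinuousLinearMap.reApplyInnerSelf_apply]
  set u := x.fst with hu
  set v := x.snd with hv
  have hQ : RCLike.re ⟪T x, x⟫_ℂ =
      RCLike.re ⟪A u, u⟫_ℂ + RCLike.re ⟪C v, u⟫_ℂ +
      (RCLike.re ⟪C u, v⟫_ℂ + RCLike.re ⟪B v, v⟫_ℂ) := by
    rw [hTx x]
    simp [WithLp.prod_inner_apply, WithLp.equiv_symm_apply, WithLp.ofLp_toLp,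
      inner_add_left]
    rfl
  rw [hQ]
  refine le_of_forall_pos_le_add fun δ hδ => ?_
  set M : ℝ := ‖u‖ ^ 2 + ‖v‖ ^ 2 + 1 with hM
  have hMpos : 0 < M := by positivity
  set ε : ℝ := δ / M with hεdef
  have hεpos : 0 < ε := div_pos hδ hMpos
  have hεM : ε * M = δ := div_mul_cancel₀ δ hMpos.ne'
  set f : ℝ → ℝ := fun z => Real.sqrt (a₁₁ z + ε) with hfdef
  set g : ℝ → ℝ := fun z => Real.sqrt (a₂₂ z + ε) with hgdef
  set c : ℝ → ℝ := fun z => a₁₂ z / (f z * g z) with hcdef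
  have hfc : ContinuousOn f (spectrum ℝ P) :=
    Real.continuous_sqrt.comp_continuousOn ((h₁₁.mono hspec).add continuousOn_const)
  have hgc : ContinuousOn g (spectrum ℝ P) :=
    Real.continuous_sqrt.comp_continuousOn ((h₂₂.mono hspec).add continuousOn_const)
  have hfpos : ∀ z ∈ spectrum ℝ P, 0 < f z := fun z hz =>
    Real.sqrt_pos.mpr (by linarith [(hfacts z hz).1])
  have hgpos : ∀ z ∈ spectrum ℝ P, 0 < g z := fun z hz =>
    Real.sqrt_pos.mpr (by linarith [(hfacts z hz).2.1])
  have hcc : ContinuousOn c (spectrum ℝ P) :=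
    (h₁₂.mono hspec).div (hfc.mul hgc)
      (fun z hz => (mul_pos (hfpos z hz) (hgpos z hz)).ne')
  have hff : ∀ z ∈ spectrum ℝ P, f z * f z = a₁₁ z + ε := fun z hz =>
    Real.mul_self_sqrt (by linarith [(hfacts z hz).1])
  have hgg : ∀ z ∈ spectrum ℝ P, g z * g z = a₂₂ z + ε := fun z hz =>
    Real.mul_self_sqrt (by linarith [(hfacts z hz).2.1])
  have hcbound : ∀ z ∈ spectrum ℝ P, |c z| ≤ 1 := by
    intro z hz
    obtain ⟨h1, h2, h3⟩ := hfacts z hz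
    have hfg : 0 < f z * g z := mul_pos (hfpos z hz) (hgpos z hz)
    rw [hcdef]
    simp only
    rw [abs_div, abs_of_pos hfg, div_le_one hfg]
    have hsq : (|a₁₂ z|) ^ 2 ≤ (f z * g z) ^ 2 := by
      rw [sq_abs]
      have e1 := hff z hz
      have e2 := hgg z hz
      nlinarith
    nlinarith [abs_nonneg (a₁₂ z)]
  set F := cfc f P with hFdef
  set G := cfc g P with hGdef
  set K := cfc c P with hKdef
  have hFs : ∀ p q : H, ⟪F p, q⟫_ℂ = ⟪p, F q⟫_ℂ := fun p q =>
    (ContinuousLinearMap.isSelfAdjoint_iff_isSymmetric.mp (cfc_predicate f P)) p q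
  have hGs : ∀ p q : H, ⟪G p, q⟫_ℂ = ⟪p, G q⟫_ℂ := fun p q =>
    (ContinuousLinearMap.isSelfAdjoint_iff_isSymmetric.mp (cfc_predicate g P)) p q
  have hKnorm : ‖K‖ ≤ 1 := norm_cfc_le zero_le_one
    (fun z hz => by simpa [Real.norm_eq_abs] using hcbound z hz)
  -- diagonal identities
  have hFFA : A + algebraMap ℝ (H →L[ℂ] H) ε = F * F := by
    rw [hAdef, hFdef, ← cfc_mul f f P hfc hfc, ← cfc_const ε P hPsa,
      ← cfc_add P a₁₁ (fun _ => ε) (h₁₁.mono hspec) continuousOn_const]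
    exact cfc_congr fun z hz => (hff z hz).symm
  have hGGB : B + algebraMap ℝ (H →L[ℂ] H) ε = G * G := by
    rw [hBdef, hGdef, ← cfc_mul g g P hgc hgc, ← cfc_const ε P hPsa,
      ← cfc_add P a₂₂ (fun _ => ε) (h₂₂.mono hspec) continuousOn_const]
    exact cfc_congr fun z hz => (hgg z hz).symm
  -- off-diagonal factorizations
  have hCgkf : C = G * (K * F) := by
    rw [hCdef, hGdef, hKdef, hFdef, ← cfc_mul c f P hcc hfc,
      ← cfc_mul g (fun x => c x * f x) P hgc (hcc.mul hfc)]
    refine cfc_congr fun z hz => ?_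
    have hfg : f z * g z ≠ 0 := (mul_pos (hfpos z hz) (hgpos z hz)).ne'
    simp only [hcdef]
    field_simp [(hfpos z hz).ne', (hgpos z hz).ne']
  have hCfkg : C = F * (K * G) := by
    rw [hCdef, hFdef, hKdef, hGdef, ← cfc_mul c g P hcc hgc,
      ← cfc_mul f (fun x => c x * g x) P hfc (hcc.mul hgc)]
    refine cfc_congr fun z hz => ?_
    have hfg : f z * g z ≠ 0 := (mul_pos (hfpos z hz) (hgpos z hz)).ne'
    simp only [hcdef]
    field_simp [(hfpos z hz).ne', (hgpos z hz).ne']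
  -- diagonal estimates
  have hAu : ∀ w : H, RCLike.re ⟪A w, w⟫_ℂ = ‖F w‖ ^ 2 - ε * ‖w‖ ^ 2 := by
    intro w
    have h1 : A w = F (F w) - ε • w := by
      have h0 := congrArg (fun O : H →L[ℂ] H => O w) hFFA
      simp only [ContinuousLinearMap.add_apply, ContinuousLinearMap.mul_apply,
        Algebra.algebraMap_eq_smul_one, ContinuousLinearMap.smul_apply,
        ContinuousLinearMap.one_apply] at h0
      rw [← h0]; abel
    rw [h1, inner_sub_left, map_sub]
    have h2 : ⟪F (F w), w⟫_ℂ = ⟪F w, F w⟫_ℂ := hFs (F w) w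
    have h3 : RCLike.re ⟪(ε : ℝ) • w, w⟫_ℂ = ε * ‖w‖ ^ 2 := by
      rw [RCLike.real_smul_eq_coe_smul (K := ℂ), inner_smul_real_left, RCLike.smul_re,
        inner_self_eq_norm_sq]
    rw [h2, h3, inner_self_eq_norm_sq]
  have hBv : ∀ w : H, RCLike.re ⟪B w, w⟫_ℂ = ‖G w‖ ^ 2 - ε * ‖w‖ ^ 2 := by
    intro w
    have h1 : B w = G (G w) - ε • w := by
      have h0 := congrArg (fun O : H →L[ℂ] H => O w) hGGB
      simp only [ContinuousLinearMap.add_apply, ContinuousLinearMap.mul_apply,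
        Algebra.algebraMap_eq_smul_one, ContinuousLinearMap.smul_apply,
        ContinuousLinearMap.one_apply] at h0
      rw [← h0]; abel
    rw [h1, inner_sub_left, map_sub]
    have h2 : ⟪G (G w), w⟫_ℂ = ⟪G w, G w⟫_ℂ := hGs (G w) w
    have h3 : RCLike.re ⟪(ε : ℝ) • w, w⟫_ℂ = ε * ‖w‖ ^ 2 := by
      rw [RCLike.real_smul_eq_coe_smul (K := ℂ), inner_smul_real_left, RCLike.smul_re,
        inner_self_eq_norm_sq]
    rw [h2, h3, inner_self_eq_norm_sq]
  -- off-diagonal estimates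
  have hbound : ∀ p q : H, -(‖p‖ * ‖q‖) ≤ RCLike.re ⟪K p, q⟫_ℂ := by
    intro p q
    have h1 : ‖⟪K p, q⟫_ℂ‖ ≤ ‖p‖ * ‖q‖ := by
      calc ‖⟪K p, q⟫_ℂ‖ ≤ ‖K p‖ * ‖q‖ := norm_inner_le_norm _ _
        _ ≤ (‖K‖ * ‖p‖) * ‖q‖ := by
            gcongr; exact K.le_opNorm p
        _ ≤ 1 * ‖p‖ * ‖q‖ := by gcongr
        _ = ‖p‖ * ‖q‖ := by ring
    have h2 : |RCLike.re ⟪K p, q⟫_ℂ| ≤ ‖⟪K p, q⟫_ℂ‖ := RCLike.abs_re_le_norm _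
    have := neg_abs_le (RCLike.re ⟪K p, q⟫_ℂ)
    linarith
  have hCuv : -(‖F u‖ * ‖G v‖) ≤ RCLike.re ⟪C u, v⟫_ℂ := by
    have h1 : ⟪C u, v⟫_ℂ = ⟪K (F u), G v⟫_ℂ := by
      rw [hCgkf]
      simp only [ContinuousLinearMap.mul_apply]
      exact hGs (K (F u)) v
    rw [h1]; exact hbound (F u) (G v)
  have hCvu : -(‖G v‖ * ‖F u‖) ≤ RCLike.re ⟪C v, u⟫_ℂ := by
    have h1 : ⟪C v, u⟫_ℂ = ⟪K (G v), F u⟫_ℂ := by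
      rw [hCfkg]
      simp only [ContinuousLinearMap.mul_apply]
      exact hFs (K (G v)) u
    rw [h1]; exact hbound (G v) (F u)
  have hau := hAu u
  have hbv := hBv v
  nlinarith [sq_nonneg (‖F u‖ - ‖G v‖), norm_nonneg u, norm_nonneg v,
    norm_nonneg (F u), norm_nonneg (G v), hεpos.le]
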